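/- arXiv:2603.09342 — 3 statements merged into one kernel-verified Lean document; each statement's English description precedes it below -/
import Mathlib

section
/- Let H ∈ ℝ^{n×n} be symmetric positive definite, f ∈ ℝⁿ, A ∈ ℝ^{m×n}, b ∈ ℝᵐ. If (x⋆, λ⋆) ∈ ℝⁿ × ℝᵐ satisfies the KKT conditions, then x⋆ is the unique global minimizer of the primal QP: A x⋆ ≤ b, J(x⋆) ≤ J(x) for every x with A x ≤ b, and any other minimizer equals x⋆. -/
open Matrix

/-- If `(x⋆, λ⋆)` satisfies the KKT conditions of the primal QP with
`H` symmetric positive definite, then `x⋆` is the unique global minimizer of the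
primal QP. -/
theorem qp_kkt_implies_unique_global_minimizer
    (n m : ℕ) (H : Matrix (Fin n) (Fin n) ℝ) (hH : H.PosDef)
    (f : Fin n → ℝ) (A : Matrix (Fin m) (Fin n) ℝ) (b : Fin m → ℝ)
    (J : (Fin n → ℝ) → ℝ)
    (hJ : J = fun x => (1 / 2) * (x ⬝ᵥ H.mulVec x) + f ⬝ᵥ x)
    (xstar : Fin n → ℝ) (lamstar : Fin m → ℝ)
    (hstat : H.mulVec xstar + Aᵀ.mulVec lamstar = -f)
    (hprimal : A.mulVec xstar ≤ b)
    (hdual : 0 ≤ lamstar)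
    (hcomp : ∀ i : Fin m, lamstar i * (A.mulVec xstar i - b i) = 0) :
    A.mulVec xstar ≤ b ∧
      (∀ x : Fin n → ℝ, A.mulVec x ≤ b → J xstar ≤ J x) ∧
      (∀ y : Fin n → ℝ, A.mulVec y ≤ b →
        (∀ x : Fin n → ℝ, A.mulVec x ≤ b → J y ≤ J x) → y = xstar) := by
  have hsym : Hᵀ = H := hH.1
  have hsymQ : ∀ u v : Fin n → ℝ, u ⬝ᵥ H.mulVec v = v ⬝ᵥ H.mulVec u := by
    intro u v
    rw [Matrix.dotProduct_mulVec, ← Matrix.mulVec_transpose, hsym,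
      dotProduct_comm]
  have hcompsum : lamstar ⬝ᵥ (A.mulVec xstar - b) = 0 := by
    simp only [dotProduct, Pi.sub_apply]
    exact Finset.sum_eq_zero fun i _ => hcomp i
  -- key identity
  have key : ∀ x : Fin n → ℝ,
      J x = J xstar + (1/2) * ((x - xstar) ⬝ᵥ H.mulVec (x - xstar))
        - lamstar ⬝ᵥ (A.mulVec x - b) := by
    intro x
    set d := x - xstar with hd
    have hx : x = xstar + d := by rw [hd]; ring
    have hAd : lamstar ⬝ᵥ A.mulVec d = lamstar ⬝ᵥ (A.mulVec x - b) := by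
      have h2 : A.mulVec d = (A.mulVec x - b) - (A.mulVec xstar - b) := by
        rw [hd, Matrix.mulVec_sub]; ring
      rw [h2, dotProduct_sub, hcompsum, sub_zero]
    have h1 : H.mulVec xstar + f = -(Aᵀ.mulVec lamstar) := by
      have := hstat
      funext i
      have h := congrFun hstat i
      simp only [Pi.add_apply, Pi.neg_apply] at h ⊢
      linarith
    have hstat' : (H.mulVec xstar) ⬝ᵥ d + f ⬝ᵥ d = -(lamstar ⬝ᵥ A.mulVec d) := by
      have h3 : (Aᵀ.mulVec lamstar) ⬝ᵥ d = lamstar ⬝ᵥ A.mulVec d := by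
        rw [Matrix.mulVec_transpose, ← Matrix.dotProduct_mulVec]
      calc (H.mulVec xstar) ⬝ᵥ d + f ⬝ᵥ d
          = (H.mulVec xstar + f) ⬝ᵥ d := by rw [add_dotProduct]
        _ = -((Aᵀ.mulVec lamstar) ⬝ᵥ d) := by rw [h1, neg_dotProduct]
        _ = -(lamstar ⬝ᵥ A.mulVec d) := by rw [h3]
    have expand : x ⬝ᵥ H.mulVec x
        = xstar ⬝ᵥ H.mulVec xstar + 2 * ((H.mulVec xstar) ⬝ᵥ d) + d ⬝ᵥ H.mulVec d := by
      conv_lhs => rw [hx]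
      rw [Matrix.mulVec_add, dotProduct_add, add_dotProduct,
        add_dotProduct]
      have e1 : xstar ⬝ᵥ H.mulVec d = (H.mulVec xstar) ⬝ᵥ d := by
        rw [hsymQ xstar d, dotProduct_comm]
      have e2 : d ⬝ᵥ H.mulVec xstar = (H.mulVec xstar) ⬝ᵥ d := by
        rw [dotProduct_comm]
      rw [e1, e2]; ring
    have fx : f ⬝ᵥ x = f ⬝ᵥ xstar + f ⬝ᵥ d := by
      conv_lhs => rw [hx]; rw [dotProduct_add]
    rw [hJ]
    simp only
    rw [expand, fx, ← hAd]
    linarith [hstat']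
  -- nonnegativity of quadratic form
  have hq : ∀ v : Fin n → ℝ, 0 ≤ v ⬝ᵥ H.mulVec v := fun v => hH.posSemidef.dotProduct_mulVec_nonneg v
  have hslack : ∀ x : Fin n → ℝ, A.mulVec x ≤ b → lamstar ⬝ᵥ (A.mulVec x - b) ≤ 0 := by
    intro x hxf
    apply Finset.sum_nonpos
    intro i _
    exact mul_nonpos_of_nonneg_of_nonpos (hdual i) (by simpa using sub_nonpos.mpr (hxf i))
  refine ⟨hprimal, fun x hxf => ?_, fun y hyf hymin => ?_⟩
  · rw [key x]
    have := hq (x - xstar)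
    have := hslack x hxf
    linarith
  · have h1 : J y ≤ J xstar := hymin xstar hprimal
    have h2 : J xstar ≤ J y := by
      rw [key y]
      have := hq (y - xstar)
      have := hslack y hyf
      linarith
    have heq : J y = J xstar := le_antisymm h1 h2
    have hkey := key y
    rw [heq] at hkey
    have hquad : (y - xstar) ⬝ᵥ H.mulVec (y - xstar) ≤ 0 := by
      have := hslack y hyf
      linarith
    by_contra hne
    have hd0 : y - xstar ≠ 0 := sub_ne_zero.mpr hne
    have hp := hH.dotProduct_mulVec_pos hd0
    rw [star_trivial] at hp
    linarith [hp, hquad]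
end

section
/- Let H ∈ ℝ^{n×n} be symmetric positive definite, f ∈ ℝⁿ, A ∈ ℝ^{m×n}, b ∈ ℝᵐ. If x⋆ is a global minimizer of the primal QP (i.e. A x⋆ ≤ b and J(x⋆) ≤ J(x) for all x with A x ≤ b), then there exists λ⋆ ∈ ℝᵐ such that (x⋆, λ⋆) satisfies the KKT conditions. (No constraint qualification is needed because the constraints are affine.) -/
open Matrix Finset

lemma farkas_aux {n : ℕ} : ∀ (m : ℕ) (a : Fin m → (Fin n → ℝ)) (g : Fin n → ℝ),
    (∀ d : Fin n → ℝ, (∀ i, a i ⬝ᵥ d ≤ 0) → g ⬝ᵥ d ≤ 0) →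
    ∃ lam : Fin m → ℝ, (∀ i, 0 ≤ lam i) ∧ g = ∑ i, lam i • a i := by
  intro m
  induction m with
  | zero =>
    intro a g h
    refine ⟨0, fun i => le_rfl, ?_⟩
    have h1 := h g (fun i => i.elim0)
    have hg : g = 0 := by
      refine dotProduct_self_eq_zero.mp (le_antisymm h1 ?_)
      exact Finset.sum_nonneg fun i _ => mul_self_nonneg _
    simp [hg]
  | succ m ih =>
    intro a g h
    set a' : Fin m → (Fin n → ℝ) := fun i => a i.castSucc with ha'
    set am : Fin n → ℝ := a (Fin.last m) with ham
    by_cases hcase : ∀ d : Fin n → ℝ, (∀ i, a' i ⬝ᵥ d ≤ 0) → g ⬝ᵥ d ≤ 0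
    · obtain ⟨μ, hμ, hg⟩ := ih a' g hcase
      refine ⟨Fin.snoc μ 0, ?_, ?_⟩
      · intro i
        refine Fin.lastCases ?_ ?_ i <;> simp [hμ]
      · rw [Fin.sum_univ_castSucc]
        simpa [Fin.snoc_castSucc, Fin.snoc_last] using hg
    · push_neg at hcase
      obtain ⟨d0, hd0, hgd0⟩ := hcase
      have hD : 0 < am ⬝ᵥ d0 := by
        by_contra hle
        push_neg at hle
        have : ∀ i, a i ⬝ᵥ d0 ≤ 0 := by
          intro i
          refine Fin.lastCases ?_ ?_ i
          · exact hle
          · intro j; exact hd0 j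
        exact absurd (h d0 this) (not_le.mpr hgd0)
      set D := am ⬝ᵥ d0 with hDdef
      set a'' : Fin m → (Fin n → ℝ) := fun i => a' i - ((a' i ⬝ᵥ d0)/D) • am with ha''
      set g'' : Fin n → ℝ := g - ((g ⬝ᵥ d0)/D) • am with hg''
      have key : ∀ d : Fin n → ℝ, (∀ i, a'' i ⬝ᵥ d ≤ 0) → g'' ⬝ᵥ d ≤ 0 := by
        intro d hd
        set d' : Fin n → ℝ := d - ((am ⬝ᵥ d)/D) • d0 with hd'
        have h1 : ∀ v : Fin n → ℝ, v ⬝ᵥ d' = (v - ((v ⬝ᵥ d0)/D) • am) ⬝ᵥ d := by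
          intro v
          simp only [hd', dotProduct_sub, sub_dotProduct, dotProduct_smul, smul_dotProduct,
            smul_eq_mul]
          ring
        have hfull : ∀ i, a i ⬝ᵥ d' ≤ 0 := by
          intro i
          refine Fin.lastCases ?_ ?_ i
          · rw [h1]
            have : am - ((am ⬝ᵥ d0)/D) • am = 0 := by
              rw [hDdef, div_self (show am ⬝ᵥ d0 ≠ 0 from hD.ne'), one_smul, sub_self]
            rw [← ham, this]
            simp
          · intro j
            rw [h1]
            exact hd j
        have := h d' hfull
        rwa [h1 g] at this
      obtain ⟨μ, hμ, hgsum⟩ := ih a'' g'' key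
      set c : ℝ := (g ⬝ᵥ d0 - ∑ i, μ i * (a' i ⬝ᵥ d0))/D with hc
      have hcnn : 0 ≤ c := by
        apply div_nonneg _ hD.le
        have hsum : ∑ i, μ i * (a' i ⬝ᵥ d0) ≤ 0 :=
          Finset.sum_nonpos fun i _ => mul_nonpos_of_nonneg_of_nonpos (hμ i) (hd0 i)
        linarith
      refine ⟨Fin.snoc μ c, ?_, ?_⟩
      · intro i
        refine Fin.lastCases ?_ ?_ i <;> simp [hμ, hcnn]
      · rw [Fin.sum_univ_castSucc]
        simp only [Fin.snoc_castSucc, Fin.snoc_last]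
        have hgeq : g = ∑ i, μ i • a'' i + ((g ⬝ᵥ d0)/D) • am := by
          rw [← hgsum, hg'']; ring_nf
        rw [hgeq]
        have : ∑ i, μ i • a'' i = ∑ i, μ i • a' i - (∑ i, μ i * (a' i ⬝ᵥ d0)/D) • am := by
          rw [ha'', Finset.sum_smul]
          rw [← Finset.sum_sub_distrib]
          congr 1
          ext i
          rw [smul_sub, smul_smul]
          ring_nf
        rw [this, hc]
        have : (g ⬝ᵥ d0 - ∑ i, μ i * (a' i ⬝ᵥ d0)) / D = (g ⬝ᵥ d0)/D - ∑ i, μ i * (a' i ⬝ᵥ d0)/D := by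
          rw [sub_div, Finset.sum_div]
        rw [this, sub_smul]
        simp only [ha']
        abel


/-- If `x⋆` is a global minimizer of the primal QP (with `H`
symmetric positive definite and affine constraints `Ax ≤ b`), then there exists a
multiplier `λ⋆ ∈ ℝᵐ` such that `(x⋆, λ⋆)` satisfies the KKT conditions. -/
theorem qp_minimizer_implies_kkt
    (n m : ℕ) (H : Matrix (Fin n) (Fin n) ℝ) (hH : H.PosDef)
    (f : Fin n → ℝ) (A : Matrix (Fin m) (Fin n) ℝ) (b : Fin m → ℝ)
    (J : (Fin n → ℝ) → ℝ)
    (hJ : J = fun x => (1 / 2) * (x ⬝ᵥ H.mulVec x) + f ⬝ᵥ x)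
    (xstar : Fin n → ℝ)
    (hfeas : A.mulVec xstar ≤ b)
    (hmin : ∀ x : Fin n → ℝ, A.mulVec x ≤ b → J xstar ≤ J x) :
    ∃ lamstar : Fin m → ℝ,
      H.mulVec xstar + Aᵀ.mulVec lamstar = -f ∧
      A.mulVec xstar ≤ b ∧
      0 ≤ lamstar ∧
      ∀ i : Fin m, lamstar i * (A.mulVec xstar i - b i) = 0 := by
  classical
  set g : Fin n → ℝ := H.mulVec xstar + f with hg
  set c : Fin m → (Fin n → ℝ) :=
    fun i => if A.mulVec xstar i = b i then (fun j => A i j) else 0 with hcdef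
  -- symmetry of H
  have hsym : ∀ u v : Fin n → ℝ, u ⬝ᵥ H.mulVec v = v ⬝ᵥ H.mulVec u := by
    intro u v
    rw [Matrix.dotProduct_mulVec, ← Matrix.mulVec_transpose]
    have hHt : Hᵀ = H := by
      have := hH.isHermitian.eq
      simpa [Matrix.conjTranspose_eq_transpose_of_trivial] using this
    rw [hHt, dotProduct_comm]
  -- expansion of J
  have hexp : ∀ (t : ℝ) (y : Fin n → ℝ),
      J (xstar + t • y) = J xstar + t * (g ⬝ᵥ y) + t^2/2 * (y ⬝ᵥ H.mulVec y) := by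
    intro t y
    subst hJ
    simp only [hg, Matrix.mulVec_add, Matrix.mulVec_smul, dotProduct_add,
      add_dotProduct, dotProduct_smul, smul_dotProduct, smul_eq_mul]
    have h1 := hsym xstar y
    have h2 : H.mulVec xstar ⬝ᵥ y = y ⬝ᵥ H.mulVec xstar := dotProduct_comm _ _
    linear_combination (t/2) * h1 - t * h2
  have hypF : ∀ d : Fin n → ℝ, (∀ i, c i ⬝ᵥ d ≤ 0) → (-g) ⬝ᵥ d ≤ 0 := by
    intro d hd
    rw [neg_dotProduct, neg_nonpos]
    by_contra hneg
    push_neg at hneg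
    set q : ℝ := d ⬝ᵥ H.mulVec d with hqdef
    have hq : 0 ≤ q := by
      have := hH.posSemidef.dotProduct_mulVec_nonneg d
      simpa [hqdef] using this
    -- small step sizes for feasibility per constraint
    have hti : ∀ i : Fin m, ∃ ti : ℝ, 0 < ti ∧
        ∀ t : ℝ, 0 < t → t ≤ ti → A.mulVec (xstar + t • d) i ≤ b i := by
      intro i
      have hrow : ∀ t : ℝ, A.mulVec (xstar + t • d) i = A.mulVec xstar i + t * A.mulVec d i := by
        intro t
        simp [Matrix.mulVec_add, Matrix.mulVec_smul]
      by_cases hact : A.mulVec xstar i = b i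
      · have hcd := hd i
        rw [hcdef] at hcd
        simp only [hact, if_pos] at hcd
        have hAd : A.mulVec d i ≤ 0 := by
          simpa [Matrix.mulVec, dotProduct] using hcd
        exact ⟨1, one_pos, fun t ht _ => by
          rw [hrow, hact]
          nlinarith⟩
      · have hslack : 0 < b i - A.mulVec xstar i :=
          sub_pos.mpr (lt_of_le_of_ne (hfeas i) hact)
        by_cases hAd : A.mulVec d i ≤ 0
        · exact ⟨1, one_pos, fun t ht _ => by
            rw [hrow]
            nlinarith⟩
        · push_neg at hAd
          refine ⟨(b i - A.mulVec xstar i) / A.mulVec d i, div_pos hslack hAd, fun t ht hle => ?_⟩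
          rw [hrow]
          have := (le_div_iff₀ hAd).mp hle
          linarith
    choose ti hti1 hti2 using hti
    -- quadratic step bound
    set tq : ℝ := if q ≤ 0 then (1:ℝ) else (-(g ⬝ᵥ d))/q with htqdef
    have htq : 0 < tq := by
      rw [htqdef]
      split_ifs with hq0
      · exact one_pos
      · exact div_pos (by linarith) (by push_neg at hq0; exact hq0)
    set s : Finset ℝ := insert tq (Finset.univ.image ti) with hsdef
    have hsne : s.Nonempty := ⟨tq, by simp [hsdef]⟩
    set t : ℝ := s.min' hsne with htdef
    have hpos_all : ∀ x ∈ s, (0:ℝ) < x := by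
      intro x hx
      rcases Finset.mem_insert.mp hx with rfl | hx
      · exact htq
      · obtain ⟨i, -, rfl⟩ := Finset.mem_image.mp hx
        exact hti1 i
    have htpos : 0 < t := hpos_all _ (s.min'_mem hsne)
    have htle_tq : t ≤ tq := Finset.min'_le s tq (by simp [hsdef])
    have htle_ti : ∀ i, t ≤ ti i := fun i => Finset.min'_le s (ti i) (by simp [hsdef])
    have hfeas' : A.mulVec (xstar + t • d) ≤ b := fun i => hti2 i t htpos (htle_ti i)
    have hJle := hmin _ hfeas'
    rw [hexp t d] at hJle
    have hkey : 0 ≤ g ⬝ᵥ d + t/2 * q := by nlinarith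
    rw [htqdef] at htle_tq
    split_ifs at htle_tq with hq0
    · nlinarith
    · push_neg at hq0
      have : t * q ≤ -(g ⬝ᵥ d) := (le_div_iff₀ hq0).mp htle_tq
      nlinarith
  obtain ⟨μ, hμ, hgeq⟩ := farkas_aux m c (-g) hypF
  set lam : Fin m → ℝ := fun i => if A.mulVec xstar i = b i then μ i else 0 with hlam
  refine ⟨lam, ?_, hfeas, ?_, ?_⟩
  · have hTl : Aᵀ.mulVec lam = -g := by
      funext j
      have hrhs := congrFun hgeq j
      simp only [Finset.sum_apply, Pi.smul_apply, smul_eq_mul] at hrhs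
      have : Aᵀ.mulVec lam j = ∑ i, μ i * c i j := by
        rw [Matrix.mulVec]
        show (fun i => Aᵀ j i) ⬝ᵥ lam = _
        rw [dotProduct]
        refine Finset.sum_congr rfl fun i _ => ?_
        by_cases hact : A.mulVec xstar i = b i
        · simp [hlam, hcdef, hact, Matrix.transpose_apply]
          ring
        · simp [hlam, hcdef, hact]
      rw [this, ← hrhs]
    funext j
    have := congrFun hTl j
    simp only [Pi.add_apply, Pi.neg_apply, hg] at this ⊢
    linarith [this]
  · intro i
    show (0:ℝ) ≤ lam i
    rw [hlam]
    simp only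
    split_ifs with hact
    · exact hμ i
    · exact le_rfl
  · intro i
    by_cases hact : A.mulVec xstar i = b i
    · rw [hact]; ring
    · have : lam i = 0 := by rw [hlam]; simp [hact]
      rw [this]; ring
end

section
/- Strong duality via complementarity: let H ∈ ℝ^{n×n} be symmetric positive definite, f ∈ ℝⁿ, A ∈ ℝ^{m×n}, b ∈ ℝᵐ. Suppose λ⋆ ≥ 0, set x⋆ = −H⁻¹(f + Aᵀλ⋆), and suppose A x⋆ ≤ b and (λ⋆)ᵀ(A x⋆ − b) = 0. Then J(x⋆) = −D(λ⋆) − (1/2)·fᵀH⁻¹f, x⋆ minimizes J over {x : A x ≤ b}, and λ⋆ minimizes D over {λ ∈ ℝᵐ : λ ≥ 0}. -/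
open Matrix

lemma dot_transpose_aux {k l : ℕ} (A : Matrix (Fin k) (Fin l) ℝ)
    (x : Fin l → ℝ) (y : Fin k → ℝ) :
    x ⬝ᵥ Aᵀ.mulVec y = A.mulVec x ⬝ᵥ y := by
  rw [Matrix.dotProduct_mulVec, Matrix.vecMul_transpose]

lemma dot_symm_aux {k : ℕ} (M : Matrix (Fin k) (Fin k) ℝ) (hM : Mᵀ = M)
    (x y : Fin k → ℝ) :
    x ⬝ᵥ M.mulVec y = y ⬝ᵥ M.mulVec x := by
  conv_lhs => rw [← hM]
  rw [dot_transpose_aux, dotProduct_comm]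

lemma quad_expand_aux {k : ℕ} (M : Matrix (Fin k) (Fin k) ℝ) (hM : Mᵀ = M)
    (q x y : Fin k → ℝ) :
    (1 / 2) * (x ⬝ᵥ M.mulVec x) + q ⬝ᵥ x =
      ((1 / 2) * (y ⬝ᵥ M.mulVec y) + q ⬝ᵥ y)
        + (M.mulVec y + q) ⬝ᵥ (x - y)
        + (1 / 2) * ((x - y) ⬝ᵥ M.mulVec (x - y)) := by
  have hsym : y ⬝ᵥ M.mulVec x = x ⬝ᵥ M.mulVec y := dot_symm_aux M hM y x
  have h1 : (M.mulVec y) ⬝ᵥ (x - y) = y ⬝ᵥ M.mulVec (x - y) := by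
    rw [dotProduct_comm, dot_symm_aux M hM]
  simp only [Matrix.mulVec_sub, dotProduct_sub, sub_dotProduct, add_dotProduct,
    dotProduct_add] at *
  ring_nf
  linarith

/-- Strong duality via complementarity: if `λ⋆ ≥ 0`,
`x⋆ = −H⁻¹(f + Aᵀλ⋆)` is primal feasible and `(λ⋆)ᵀ(Ax⋆ − b) = 0`, then
`J(x⋆) = −D(λ⋆) − (1/2)·fᵀH⁻¹f`, `x⋆` minimizes the primal QP and `λ⋆`
minimizes the dual QP. -/
theorem qp_strong_duality_via_complementarity
    (n m : ℕ) (H : Matrix (Fin n) (Fin n) ℝ) (hH : H.PosDef)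
    (f : Fin n → ℝ) (A : Matrix (Fin m) (Fin n) ℝ) (b : Fin m → ℝ)
    (J : (Fin n → ℝ) → ℝ)
    (hJ : J = fun x => (1 / 2) * (x ⬝ᵥ H.mulVec x) + f ⬝ᵥ x)
    (D : (Fin m → ℝ) → ℝ)
    (hD : D = fun lam => (1 / 2) * (lam ⬝ᵥ (A * H⁻¹ * Aᵀ).mulVec lam)
        + (b + A.mulVec (H⁻¹.mulVec f)) ⬝ᵥ lam)
    (lamstar : Fin m → ℝ) (hlam : 0 ≤ lamstar)
    (xstar : Fin n → ℝ)
    (hx : xstar = -(H⁻¹.mulVec (f + Aᵀ.mulVec lamstar)))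
    (hfeas : A.mulVec xstar ≤ b)
    (hcomp : lamstar ⬝ᵥ (A.mulVec xstar - b) = 0) :
    J xstar = -D lamstar - (1 / 2) * (f ⬝ᵥ H⁻¹.mulVec f) ∧
      (∀ x : Fin n → ℝ, A.mulVec x ≤ b → J xstar ≤ J x) ∧
      (∀ lam : Fin m → ℝ, 0 ≤ lam → D lamstar ≤ D lam) := by
  have hdet : IsUnit H.det := hH.det_pos.ne'.isUnit
  have hHsymm : Hᵀ = H := hH.1.eq
  have hHinv_symm : (H⁻¹)ᵀ = H⁻¹ := by
    rw [Matrix.transpose_nonsing_inv, hHsymm]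
  have hHinvPD : (H⁻¹).PosDef := hH.inv
  -- notation
  set g : Fin n → ℝ := Aᵀ.mulVec lamstar with hg
  set u : Fin n → ℝ := H⁻¹.mulVec f with hu
  set w : Fin n → ℝ := H⁻¹.mulVec g with hw
  have hxuw : xstar = -(u + w) := by
    rw [hx, Matrix.mulVec_add]
  have hHx : H.mulVec xstar = -(f + g) := by
    rw [hx, Matrix.mulVec_neg, Matrix.mulVec_mulVec,
      Matrix.mul_nonsing_inv H hdet, Matrix.one_mulVec]
  have hc1 : lamstar ⬝ᵥ A.mulVec xstar = lamstar ⬝ᵥ b := by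
    have := hcomp
    simp only [dotProduct_sub] at this
    linarith
  -- A x⋆ = -(A u + A w)
  have hAx : A.mulVec xstar = -(A.mulVec u + A.mulVec w) := by
    rw [hxuw, Matrix.mulVec_neg, Matrix.mulVec_add]
  -- x⋆ ⬝ g = λ ⬝ b
  have hxg : xstar ⬝ᵥ g = lamstar ⬝ᵥ b := by
    rw [hg, dot_transpose_aux, dotProduct_comm, hc1]
  -- scalar facts
  have hfw_gu : f ⬝ᵥ w = g ⬝ᵥ u := by
    rw [hw, hu, dot_symm_aux _ hHinv_symm]
  have hkey : -(u ⬝ᵥ g + w ⬝ᵥ g) = lamstar ⬝ᵥ b := by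
    have : xstar ⬝ᵥ g = -(u ⬝ᵥ g + w ⬝ᵥ g) := by
      rw [hxuw]; simp [add_dotProduct, neg_dotProduct]
    linarith [hxg, this]
  -- value of J at xstar
  have hJval : J xstar = (1/2) * (f ⬝ᵥ u + f ⬝ᵥ w) - (1/2) * (lamstar ⬝ᵥ b)
      - (f ⬝ᵥ u + f ⬝ᵥ w) := by
    have h1 : xstar ⬝ᵥ H.mulVec xstar = -(xstar ⬝ᵥ f + xstar ⬝ᵥ g) := by
      rw [hHx]; simp [dotProduct_add]
    have h2 : f ⬝ᵥ xstar = -(f ⬝ᵥ u + f ⬝ᵥ w) := by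
      rw [hxuw]; simp [dotProduct_add]
    have h3 : xstar ⬝ᵥ f = f ⬝ᵥ xstar := dotProduct_comm _ _
    rw [hJ]
    simp only []
    rw [h1, h2]
    rw [h3, h2, hxg]
    ring
  -- value of D at lamstar
  have hMlam : (A * H⁻¹ * Aᵀ).mulVec lamstar = A.mulVec w := by
    rw [← Matrix.mulVec_mulVec, ← Matrix.mulVec_mulVec, hw, hg]
  have hDval : D lamstar = (1/2) * (w ⬝ᵥ g) + (b ⬝ᵥ lamstar) + f ⬝ᵥ w := by
    have h1 : lamstar ⬝ᵥ A.mulVec w = w ⬝ᵥ g := by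
      have : w ⬝ᵥ g = A.mulVec w ⬝ᵥ lamstar := by rw [hg, dot_transpose_aux]
      rw [this, dotProduct_comm]
    have h2 : (A.mulVec u) ⬝ᵥ lamstar = u ⬝ᵥ g := by
      have : u ⬝ᵥ g = A.mulVec u ⬝ᵥ lamstar := by rw [hg, dot_transpose_aux]
      rw [this]
    rw [hD]
    simp only []
    rw [hMlam, h1, add_dotProduct, h2]
    have : u ⬝ᵥ g = f ⬝ᵥ w := by
      rw [hfw_gu, dotProduct_comm]
    rw [this]
    ring
  refine ⟨?_, ?_, ?_⟩
  · -- strong duality value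
    have hwg : w ⬝ᵥ g = g ⬝ᵥ w := dotProduct_comm _ _
    have hub : u ⬝ᵥ g = f ⬝ᵥ w := by rw [hfw_gu, dotProduct_comm]
    have hbl : b ⬝ᵥ lamstar = lamstar ⬝ᵥ b := dotProduct_comm _ _
    have hfu : f ⬝ᵥ H⁻¹.mulVec f = f ⬝ᵥ u := rfl
    rw [hJval, hDval, hfu]
    linarith [hkey, hub]
  · -- primal optimality
    intro x hxfeas
    have hexp := quad_expand_aux H hHsymm f x xstar
    have hgrad : H.mulVec xstar + f = -g := by
      rw [hHx]; abel
    have hquad : 0 ≤ (x - xstar) ⬝ᵥ H.mulVec (x - xstar) :=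
      by have := hH.posSemidef.dotProduct_mulVec_nonneg (x - xstar); rwa [star_trivial] at this
    have hlin : 0 ≤ (H.mulVec xstar + f) ⬝ᵥ (x - xstar) := by
      rw [hgrad]
      have h1 : (-g) ⬝ᵥ (x - xstar) = lamstar ⬝ᵥ b - lamstar ⬝ᵥ A.mulVec x := by
        have hgx : g ⬝ᵥ x = lamstar ⬝ᵥ A.mulVec x := by
          rw [hg, dotProduct_comm, dot_transpose_aux, dotProduct_comm]
        have hgxs : g ⬝ᵥ xstar = lamstar ⬝ᵥ b := by
          rw [dotProduct_comm, hxg]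
        simp only [neg_dotProduct, dotProduct_sub, hgx, hgxs]
        ring
      rw [h1]
      have : lamstar ⬝ᵥ A.mulVec x ≤ lamstar ⬝ᵥ b := by
        apply Finset.sum_le_sum
        intro i _
        exact mul_le_mul_of_nonneg_left (hxfeas i) (hlam i)
      linarith
    rw [hJ]
    simp only []
    rw [hexp]
    linarith
  · -- dual optimality
    intro lam hlam'
    set M : Matrix (Fin m) (Fin m) ℝ := A * H⁻¹ * Aᵀ with hM
    have hMsymm : Mᵀ = M := by
      rw [hM, Matrix.transpose_mul, Matrix.transpose_mul, Matrix.transpose_transpose,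
        hHinv_symm, Matrix.mul_assoc]
    have hexp := quad_expand_aux M hMsymm (b + A.mulVec u) lam lamstar
    have hgrad : M.mulVec lamstar + (b + A.mulVec u) = b - A.mulVec xstar := by
      rw [hMlam, hAx]; abel
    have hquad : 0 ≤ (lam - lamstar) ⬝ᵥ M.mulVec (lam - lamstar) := by
      have : M.mulVec (lam - lamstar)
          = A.mulVec (H⁻¹.mulVec (Aᵀ.mulVec (lam - lamstar))) := by
        rw [hM, ← Matrix.mulVec_mulVec, ← Matrix.mulVec_mulVec]
      rw [this]
      have h2 : (lam - lamstar) ⬝ᵥ A.mulVec (H⁻¹.mulVec (Aᵀ.mulVec (lam - lamstar)))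
          = (Aᵀ.mulVec (lam - lamstar)) ⬝ᵥ H⁻¹.mulVec (Aᵀ.mulVec (lam - lamstar)) := by
        rw [dotProduct_comm, ← dot_transpose_aux, dotProduct_comm,
          dot_symm_aux _ hHinv_symm]
      rw [h2]
      have := hHinvPD.posSemidef.dotProduct_mulVec_nonneg (Aᵀ.mulVec (lam - lamstar))
      rwa [star_trivial] at this
    have hlin : 0 ≤ (M.mulVec lamstar + (b + A.mulVec u)) ⬝ᵥ (lam - lamstar) := by
      rw [hgrad]
      have h1 : (b - A.mulVec xstar) ⬝ᵥ (lam - lamstar)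
          = (b - A.mulVec xstar) ⬝ᵥ lam - (b - A.mulVec xstar) ⬝ᵥ lamstar := by
        rw [dotProduct_sub]
      have h2 : (b - A.mulVec xstar) ⬝ᵥ lamstar = 0 := by
        have : (b - A.mulVec xstar) ⬝ᵥ lamstar
            = -(lamstar ⬝ᵥ (A.mulVec xstar - b)) := by
          rw [dotProduct_comm, dotProduct_sub, dotProduct_sub]; ring
        rw [this, hcomp, neg_zero]
      have h3 : 0 ≤ (b - A.mulVec xstar) ⬝ᵥ lam := by
        apply Finset.sum_nonneg
        intro i _
        exact mul_nonneg (sub_nonneg.2 (hfeas i)) (hlam' i)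
      rw [h1, h2]
      linarith
    rw [hD]
    simp only []
    rw [hexp]
    linarith
end
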